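/- arXiv:2203.05903 — 2 statements merged into one kernel-verified Lean document; each statement's English description precedes it below -/
import Mathlib

section
/- Fix x̌, x̂ ∈ ℝⁿ with x̌⁽ˡ⁾ < x̂⁽ˡ⁾ for every l, and let g be the associated erf-product function. Then g(z) > 0 for all z ∈ ℝⁿ and the function z ↦ log g(z) is concave on ℝⁿ. -/
/-- The Gauss error function `erf x = (2/√π) ∫₀ˣ exp (−t²) dt`. -/
noncomputable def erf (x : ℝ) : ℝ :=
  (2 / Real.sqrt Real.pi) * ∫ t in (0:ℝ)..x, Real.exp (-t ^ 2)

/-- The erf-product function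
`g z = 2⁻ⁿ ∏ₗ (erf((zₗ − x̌ₗ)/√2) − erf((zₗ − x̂ₗ)/√2))`. -/
noncomputable def gerf {n : ℕ} (xlo xhi : Fin n → ℝ) (z : Fin n → ℝ) : ℝ :=
  (1 / 2 : ℝ) ^ n *
    ∏ l, (erf ((z l - xlo l) / Real.sqrt 2) - erf ((z l - xhi l) / Real.sqrt 2))

lemma cont_ens : Continuous fun u : ℝ => Real.exp (-u ^ 2) := by continuity
lemma ii_ens (a b : ℝ) : IntervalIntegrable (fun u : ℝ => Real.exp (-u ^ 2))
    MeasureTheory.volume a b := cont_ens.intervalIntegrable a b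

lemma erf_sub (x y : ℝ) : erf x - erf y
    = (2 / Real.sqrt Real.pi) * ∫ u in y..x, Real.exp (-u ^ 2) := by
  unfold erf
  rw [← mul_sub]
  congr 1
  rw [← intervalIntegral.integral_add_adjacent_intervals (ii_ens 0 y) (ii_ens y x)]
  ring

lemma erf_hasDerivAt (x : ℝ) :
    HasDerivAt erf ((2 / Real.sqrt Real.pi) * Real.exp (-x ^ 2)) x := by
  have h := intervalIntegral.integral_hasDerivAt_right (ii_ens 0 x)
    (cont_ens.stronglyMeasurableAtFilter _ _) cont_ens.continuousAt
  exact h.const_mul _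

noncomputable def herf (a b t : ℝ) : ℝ :=
  erf ((t - a) / Real.sqrt 2) - erf ((t - b) / Real.sqrt 2)

noncomputable def herfD (a b t : ℝ) : ℝ :=
  (2 / Real.sqrt Real.pi) * (1 / Real.sqrt 2) *
    (Real.exp (-((t - a) / Real.sqrt 2) ^ 2) - Real.exp (-((t - b) / Real.sqrt 2) ^ 2))

noncomputable def herfD2 (a b t : ℝ) : ℝ :=
  (2 / Real.sqrt Real.pi) *
    (((t - b) / Real.sqrt 2) * Real.exp (-((t - b) / Real.sqrt 2) ^ 2)
      - ((t - a) / Real.sqrt 2) * Real.exp (-((t - a) / Real.sqrt 2) ^ 2))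

lemma sqrt2_pos : (0:ℝ) < Real.sqrt 2 := Real.sqrt_pos.2 (by norm_num)
lemma sqrt2_mul_self : Real.sqrt 2 * Real.sqrt 2 = 2 := Real.mul_self_sqrt (by norm_num)

lemma herf_eq_integral (a b t : ℝ) : herf a b t
    = (2 / Real.sqrt Real.pi) *
        ∫ u in ((t - b) / Real.sqrt 2)..((t - a) / Real.sqrt 2), Real.exp (-u ^ 2) :=
  erf_sub _ _

lemma herf_pos (a b : ℝ) (hab : a < b) (t : ℝ) : 0 < herf a b t := by
  rw [herf_eq_integral]
  have hlt : (t - b) / Real.sqrt 2 < (t - a) / Real.sqrt 2 :=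
    div_lt_div_of_pos_right (by linarith) sqrt2_pos
  have hZ := intervalIntegral.intervalIntegral_pos_of_pos_on (ii_ens _ _)
    (fun u _ => Real.exp_pos _) hlt
  have hk : 0 < 2 / Real.sqrt Real.pi := by positivity
  exact mul_pos hk hZ

lemma aux_inner (c t : ℝ) : HasDerivAt (fun t : ℝ => (t - c) / Real.sqrt 2)
    (1 / Real.sqrt 2) t := ((hasDerivAt_id t).sub_const c).div_const _

lemma herf_hasDerivAt (a b t : ℝ) : HasDerivAt (herf a b) (herfD a b t) t := by
  have e1 := (erf_hasDerivAt ((t - a) / Real.sqrt 2)).comp t (aux_inner a t)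
  have e2 := (erf_hasDerivAt ((t - b) / Real.sqrt 2)).comp t (aux_inner b t)
  have h := e1.sub e2
  refine h.congr_deriv ?_
  unfold herfD; ring

lemma exp_aux_hasDerivAt (c t : ℝ) :
    HasDerivAt (fun x : ℝ => Real.exp (-((x - c) / Real.sqrt 2) ^ 2))
      (Real.exp (-((t - c) / Real.sqrt 2) ^ 2) * -(t - c)) t := by
  convert (((aux_inner c t).pow 2).neg).exp using 1
  congr 1
  norm_num
  field_simp
  rw [Real.sq_sqrt (by norm_num)]; ring

lemma herfD_hasDerivAt (a b t : ℝ) : HasDerivAt (herfD a b) (herfD2 a b t) t := by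
  have h := ((exp_aux_hasDerivAt a t).sub (exp_aux_hasDerivAt b t)).const_mul
    ((2 / Real.sqrt Real.pi) * (1 / Real.sqrt 2))
  refine h.congr_deriv ?_
  unfold herfD2
  have hne : Real.sqrt 2 ≠ 0 := ne_of_gt sqrt2_pos
  field_simp
  ring

/-- The key "truncated Gaussian variance ≤ 1/2" inequality. -/
lemma key_ineq {α β : ℝ} (hαβ : α < β) :
    (∫ u in α..β, Real.exp (-u ^ 2)) * (α * Real.exp (-α ^ 2) - β * Real.exp (-β ^ 2))
      ≤ (Real.exp (-α ^ 2) - Real.exp (-β ^ 2)) ^ 2 / 2 := by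
  set A := Real.exp (-α ^ 2) with hA
  set B := Real.exp (-β ^ 2) with hB
  set Z := ∫ u in α..β, Real.exp (-u ^ 2) with hZ
  have hApos : 0 < A := Real.exp_pos _
  have hBpos : 0 < B := Real.exp_pos _
  have hZpos : 0 < Z := by
    refine intervalIntegral.intervalIntegral_pos_of_pos_on (ii_ens α β)
      (fun u _ => Real.exp_pos _) hαβ
  have hcont2 : Continuous fun u : ℝ => 2 * u * Real.exp (-u ^ 2) := by continuity
  have hii2 : IntervalIntegrable (fun u : ℝ => 2 * u * Real.exp (-u ^ 2))
      MeasureTheory.volume α β := hcont2.intervalIntegrable α β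
  have hD : A - B = ∫ u in α..β, 2 * u * Real.exp (-u ^ 2) := by
    have hder : ∀ u ∈ Set.uIcc α β,
        HasDerivAt (fun u : ℝ => -Real.exp (-u ^ 2)) (2 * u * Real.exp (-u ^ 2)) u := by
      intro u _
      have h1 : HasDerivAt (fun u : ℝ => -(u ^ 2)) (-(2 * u ^ 1 * 1)) u :=
        ((hasDerivAt_id u).pow 2).neg
      have h2 := (h1.exp).neg
      refine h2.congr_deriv ?_
      ring
    have := intervalIntegral.integral_eq_sub_of_hasDerivAt hder hii2
    rw [this]; ring
  have hlo : 2 * α * Z ≤ A - B := by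
    rw [hD]
    have : 2 * α * Z = ∫ u in α..β, 2 * α * Real.exp (-u ^ 2) := by
      rw [intervalIntegral.integral_const_mul]
    rw [this]
    refine intervalIntegral.integral_mono_on hαβ.le
      ((continuous_const.mul cont_ens).intervalIntegrable α β) hii2 ?_
    intro u hu
    have := Real.exp_pos (-u ^ 2)
    nlinarith [hu.1]
  have hhi : A - B ≤ 2 * β * Z := by
    rw [hD]
    have : 2 * β * Z = ∫ u in α..β, 2 * β * Real.exp (-u ^ 2) := by
      rw [intervalIntegral.integral_const_mul]
    rw [this]
    refine intervalIntegral.integral_mono_on hαβ.le hii2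
      ((continuous_const.mul cont_ens).intervalIntegrable α β) ?_
    intro u hu
    have := Real.exp_pos (-u ^ 2)
    nlinarith [hu.2]
  nlinarith [mul_le_mul_of_nonneg_right hlo hApos.le,
    mul_le_mul_of_nonneg_right hhi hBpos.le]

lemma logherf_concave (a b : ℝ) (hab : a < b) :
    ConcaveOn ℝ Set.univ (fun t => Real.log (herf a b t)) := by
  have hpos := herf_pos a b hab
  have hL : ∀ t, HasDerivAt (fun t => Real.log (herf a b t))
      (herfD a b t / herf a b t) t :=
    fun t => (herf_hasDerivAt a b t).log (hpos t).ne'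
  have hdL : deriv (fun t => Real.log (herf a b t)) = fun t => herfD a b t / herf a b t :=
    funext fun t => (hL t).deriv
  have hQ : ∀ t, HasDerivAt (fun t => herfD a b t / herf a b t)
      ((herfD2 a b t * herf a b t - herfD a b t * herfD a b t) / herf a b t ^ 2) t :=
    fun t => (herfD_hasDerivAt a b t).div (herf_hasDerivAt a b t) (hpos t).ne'
  apply concaveOn_univ_of_deriv2_nonpos
  · exact fun t => (hL t).differentiableAt
  · rw [hdL]; exact fun t => (hQ t).differentiableAt
  · intro x
    have h2 : deriv^[2] (fun t => Real.log (herf a b t)) x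
        = deriv (deriv (fun t => Real.log (herf a b t))) x := rfl
    rw [h2, hdL, (hQ x).deriv]
    apply div_nonpos_of_nonpos_of_nonneg _ (sq_nonneg _)
    -- the key numerator inequality
    set s : ℝ := Real.sqrt 2
    set k : ℝ := 2 / Real.sqrt Real.pi with hk
    set α : ℝ := (x - b) / s with hα
    set β : ℝ := (x - a) / s with hβ
    have hαβ : α < β := div_lt_div_of_pos_right (by linarith) sqrt2_pos
    set A : ℝ := Real.exp (-α ^ 2)
    set B : ℝ := Real.exp (-β ^ 2)
    set Z : ℝ := ∫ u in α..β, Real.exp (-u ^ 2) with hZ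
    have hkey := key_ineq hαβ
    have hherf : herf a b x = k * Z := herf_eq_integral a b x
    have hD1 : herfD a b x = k * (1 / s) * (B - A) := rfl
    have hD2 : herfD2 a b x = k * (α * A - β * B) := rfl
    have hknn : 0 ≤ k ^ 2 := sq_nonneg k
    have hs2 : s * s = 2 := sqrt2_mul_self
    have hsne : s ≠ 0 := ne_of_gt sqrt2_pos
    rw [hherf, hD1, hD2]
    have step1 : k * (α * A - β * B) * (k * Z) = k ^ 2 * (Z * (α * A - β * B)) := by ring
    have step2 : k * (1 / s) * (B - A) * (k * (1 / s) * (B - A))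
        = k ^ 2 * ((A - B) ^ 2 / 2) := by
      have h1 : (1 / s) * (1 / s) = 1 / 2 := by
        rw [div_mul_div_comm, one_mul, hs2]
      linear_combination (k ^ 2 * (B - A) ^ 2) * h1
    rw [step1, step2]
    have := mul_le_mul_of_nonneg_left hkey hknn
    linarith

lemma sum_concave {n : ℕ} (f : Fin n → ℝ → ℝ)
    (hf : ∀ l, ConcaveOn ℝ Set.univ (f l)) :
    ConcaveOn ℝ Set.univ (fun z : Fin n → ℝ => ∑ l, f l (z l)) := by
  classical
  have H : ∀ s : Finset (Fin n),
      ConcaveOn ℝ Set.univ (fun z : Fin n → ℝ => ∑ l ∈ s, f l (z l)) := by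
    intro s
    induction s using Finset.cons_induction with
    | empty => simpa using concaveOn_const (0 : ℝ) convex_univ
    | cons i s hi ih =>
      simp only [Finset.sum_cons]
      have hterm : ConcaveOn ℝ Set.univ (fun z : Fin n → ℝ => f i (z i)) := by
        have := (hf i).comp_linearMap (LinearMap.proj i : (Fin n → ℝ) →ₗ[ℝ] ℝ)
        exact this
      exact hterm.add ih
  exact H Finset.univ

/-- if `x̌ₗ < x̂ₗ` for every `l`, then the erf-product function `g` is
positive everywhere and `log ∘ g` is concave on `ℝⁿ`. -/
theorem gerf_pos_and_logConcave
    {n : ℕ} (xlo xhi : Fin n → ℝ) (hx : ∀ l, xlo l < xhi l) :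
    (∀ z : Fin n → ℝ, 0 < gerf xlo xhi z) ∧
      ConcaveOn ℝ Set.univ (fun z : Fin n → ℝ => Real.log (gerf xlo xhi z)) := by
  have hpos : ∀ z : Fin n → ℝ, 0 < gerf xlo xhi z := by
    intro z
    apply mul_pos (pow_pos (by norm_num) n)
    exact Finset.prod_pos fun l _ => herf_pos (xlo l) (xhi l) (hx l) (z l)
  refine ⟨hpos, ?_⟩
  have hrw : (fun z : Fin n → ℝ => Real.log (gerf xlo xhi z))
      = fun z : Fin n → ℝ => Real.log ((1 / 2 : ℝ) ^ n)
          + ∑ l, Real.log (herf (xlo l) (xhi l) (z l)) := by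
    funext z
    show Real.log ((1 / 2 : ℝ) ^ n * ∏ l, herf (xlo l) (xhi l) (z l)) = _
    rw [Real.log_mul (by positivity)
        (Finset.prod_pos fun l _ => herf_pos (xlo l) (xhi l) (hx l) (z l)).ne',
      Real.log_prod fun l _ => (herf_pos (xlo l) (xhi l) (hx l) (z l)).ne']
  rw [hrw]
  exact (concaveOn_const _ convex_univ).add
    (sum_concave _ fun l => logherf_concave _ _ (hx l))
end

section
/- Fix x̌, x̂ ∈ ℝⁿ with x̌⁽ˡ⁾ ≤ x̂⁽ˡ⁾ for every l, let g be the associated erf-product function, and let v̄ = (x̌ + x̂)/2 be the center of the box [x̌, x̂]. Let ž, ẑ ∈ ℝⁿ with ž⁽ˡ⁾ ≤ ẑ⁽ˡ⁾ for all l, and define z_min ∈ ℝⁿ coordinatewise by letting z_min⁽ˡ⁾ be the endpoint of [ž⁽ˡ⁾, ẑ⁽ˡ⁾] farther from v̄⁽ˡ⁾ (i.e., z_min⁽ˡ⁾ = argmax over z ∈ {ž⁽ˡ⁾, ẑ⁽ˡ⁾} of |z − v̄⁽ˡ⁾|). Then g(z_min) ≤ g(z) for every z in the box [ž, ẑ].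 -/
open intervalIntegral MeasureTheory Real

noncomputable def Gint (x : ℝ) : ℝ := ∫ t in (0:ℝ)..x, Real.exp (-t ^ 2)

lemma contE : Continuous fun t : ℝ => Real.exp (-t ^ 2) := by
  exact Real.continuous_exp.comp (continuous_pow 2).neg

lemma intE (a b : ℝ) : IntervalIntegrable (fun t : ℝ => Real.exp (-t ^ 2)) volume a b :=
  contE.intervalIntegrable a b

lemma hasDerivGint (x : ℝ) : HasDerivAt Gint (Real.exp (-x ^ 2)) x :=
  intervalIntegral.integral_hasDerivAt_right (intE 0 x)
    (contE.stronglyMeasurableAtFilter _ _) contE.continuousAt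

/-- `F m = ∫_{m-r}^{m+r} exp(-t²)` -/
noncomputable def Fint (r m : ℝ) : ℝ := Gint (m + r) - Gint (m - r)

lemma Fint_eq (r m : ℝ) : Fint r m = ∫ t in (m - r)..(m + r), Real.exp (-t ^ 2) := by
  unfold Fint Gint
  rw [intervalIntegral.integral_interval_sub_left (intE 0 (m+r)) (intE 0 (m-r))]

lemma hasDerivFint (r m : ℝ) :
    HasDerivAt (Fint r) (Real.exp (-(m + r) ^ 2) - Real.exp (-(m - r) ^ 2)) m := by
  have h1 := (hasDerivGint (m + r)).comp m ((hasDerivAt_id m).add_const r)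
  have h2 := (hasDerivGint (m - r)).comp m ((hasDerivAt_id m).sub_const r)
  have h := h1.sub h2
  simp at h
  exact h

lemma Fint_antitoneOn (r : ℝ) (hr : 0 ≤ r) : AntitoneOn (Fint r) (Set.Ici 0) := by
  apply antitoneOn_of_deriv_nonpos (convex_Ici 0)
  · exact fun x _ => ((hasDerivFint r x).continuousAt).continuousWithinAt
  · exact fun x _ => ((hasDerivFint r x).differentiableAt).differentiableWithinAt
  · intro x hx
    rw [interior_Ici] at hx
    rw [(hasDerivFint r x).deriv]
    have hx0 : 0 ≤ x := le_of_lt hx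
    have : (x - r) ^ 2 ≤ (x + r) ^ 2 := by nlinarith
    have := Real.exp_le_exp.2 (neg_le_neg this)
    linarith

lemma Fint_even (r m : ℝ) : Fint r (-m) = Fint r m := by
  rw [Fint_eq, Fint_eq]
  have : (∫ t in (m - r)..(m + r), Real.exp (-t ^ 2))
      = ∫ t in (m - r)..(m + r), Real.exp (-(-t) ^ 2) := by
    simp [neg_pow]
  rw [this, intervalIntegral.integral_comp_neg (fun t => Real.exp (-t ^ 2))]
  congr 1 <;> ring

lemma Fint_abs_le (r : ℝ) (hr : 0 ≤ r) {m₁ m₂ : ℝ} (h : |m₁| ≤ |m₂|) :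
    Fint r m₂ ≤ Fint r m₁ := by
  have h1 : Fint r m₁ = Fint r |m₁| := by
    rcases abs_choice m₁ with h' | h'
    · rw [h']
    · rw [h', Fint_even]
  have h2 : Fint r m₂ = Fint r |m₂| := by
    rcases abs_choice m₂ with h' | h'
    · rw [h']
    · rw [h', Fint_even]
  rw [h1, h2]
  exact Fint_antitoneOn r hr (abs_nonneg m₁) ((abs_nonneg m₁).trans h) h

lemma erf_sub_eq (a b z : ℝ) :
    erf ((z - a) / Real.sqrt 2) - erf ((z - b) / Real.sqrt 2)
      = (2 / Real.sqrt Real.pi) *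
        Fint ((b - a) / (2 * Real.sqrt 2)) ((z - (a + b) / 2) / Real.sqrt 2) := by
  have hs : Real.sqrt 2 ≠ 0 := by positivity
  have e1 : (z - (a + b) / 2) / Real.sqrt 2 + (b - a) / (2 * Real.sqrt 2)
      = (z - a) / Real.sqrt 2 := by field_simp; ring
  have e2 : (z - (a + b) / 2) / Real.sqrt 2 - (b - a) / (2 * Real.sqrt 2)
      = (z - b) / Real.sqrt 2 := by field_simp; ring
  unfold erf Fint Gint
  rw [← mul_sub, e1, e2]

lemma factor_nonneg {a b : ℝ} (hab : a ≤ b) (z : ℝ) :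
    0 ≤ erf ((z - a) / Real.sqrt 2) - erf ((z - b) / Real.sqrt 2) := by
  rw [erf_sub_eq]
  apply mul_nonneg (by positivity)
  rw [Fint_eq]
  apply intervalIntegral.integral_nonneg
  · have : 0 ≤ (b - a) / (2 * Real.sqrt 2) :=
      div_nonneg (by linarith) (by positivity)
    linarith
  · intro t _
    positivity

lemma factor_mono {a b : ℝ} (hab : a ≤ b) {z₁ z₂ : ℝ}
    (h : |z₂ - (a + b) / 2| ≤ |z₁ - (a + b) / 2|) :
    erf ((z₁ - a) / Real.sqrt 2) - erf ((z₁ - b) / Real.sqrt 2)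
      ≤ erf ((z₂ - a) / Real.sqrt 2) - erf ((z₂ - b) / Real.sqrt 2) := by
  rw [erf_sub_eq, erf_sub_eq]
  apply mul_le_mul_of_nonneg_left _ (by positivity)
  apply Fint_abs_le _ (div_nonneg (by linarith) (by positivity))
  rw [abs_div, abs_div]
  gcongr

/-- lower-bound half of Theorem 1: the minimum of `g` over the box of
candidate means `[ž, ẑ]` is attained at the coordinatewise endpoint `z_min` of
`[ž, ẑ]` farther from the center `v̄ = (x̌ + x̂)/2` of the target box. -/
theorem gerf_min_at_farthest_vertex
    {n : ℕ} (xlo xhi : Fin n → ℝ) (hx : ∀ l, xlo l ≤ xhi l)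
    (zlo zhi : Fin n → ℝ) (hz : ∀ l, zlo l ≤ zhi l)
    (vbar : Fin n → ℝ) (hvbar : vbar = fun l => (xlo l + xhi l) / 2)
    (zmin : Fin n → ℝ)
    (hzmin : ∀ l, zmin l =
      if |zhi l - vbar l| ≤ |zlo l - vbar l| then zlo l else zhi l) :
    ∀ z ∈ Set.Icc zlo zhi, gerf xlo xhi zmin ≤ gerf xlo xhi z := by
  intro z hzmem
  unfold gerf
  apply mul_le_mul_of_nonneg_left _ (by positivity)
  apply Finset.prod_le_prod
  · intro l _
    exact factor_nonneg (hx l) _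
  · intro l _
    apply factor_mono (hx l)
    have hv : vbar l = (xlo l + xhi l) / 2 := by rw [hvbar]
    rw [← hv]
    have h1 : zlo l ≤ z l := hzmem.1 l
    have h2 : z l ≤ zhi l := hzmem.2 l
    have hlo := le_abs_self (zlo l - vbar l)
    have hlo' := neg_le_abs (zlo l - vbar l)
    have hhi := le_abs_self (zhi l - vbar l)
    have hhi' := neg_le_abs (zhi l - vbar l)
    rw [hzmin l]
    split_ifs with hcase
    · rw [abs_sub_le_iff]
      constructor <;> linarith
    · push_neg at hcase
      rw [abs_sub_le_iff]
      constructor <;> linarith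
end
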